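/- Let $n\ge 1$ be an integer and let $N$ be an integer with $N>(n+1)/2$. There is a constant $C=C(n,N)$ such that for all $\Lambda>0$ and $\rho>0$: $\int_{-\infty}^{\infty} \frac{(1+\Lambda|v|)^{-\frac{n-1}{2}}\,|v|^{n-1}}{(1+\Lambda|\rho-v|)^{N}}\,dv \;\le\; C\,\Lambda^{-\frac{n+1}{2}}\rho^{\frac{n-1}{2}}$ if $\Lambda\rho\ge 1$, and $\int_{-\infty}^{\infty} \frac{(1+\Lambda|v|)^{-\frac{n-1}{2}}\,|v|^{n-1}}{(1+\Lambda|\rho-v|)^{N}}\,dv \;\le\; C\,\Lambda^{-n}$ if $\Lambda\rho\le 1$. -/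

import Mathlib

open MeasureTheory Real

/-- The elementary integral bound
`∫ (1+Λ|v|)^{-(n-1)/2} |v|^{n-1} (1+Λ|ρ-v|)^{-N} dv ≲ Λ^{-(n+1)/2} ρ^{(n-1)/2}` when
`Λρ ≥ 1`, and `≲ Λ^{-n}` when `Λρ ≤ 1`. -/
theorem integral_convolution_bound (n N : ℕ) (hn : 1 ≤ n)
    (hN : ((n : ℝ) + 1) / 2 < (N : ℝ)) :
    ∃ C : ℝ, ∀ Λ ρ : ℝ, 0 < Λ → 0 < ρ →
      (1 ≤ Λ * ρ →
        (∫⁻ v : ℝ, ENNReal.ofReal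
            ((1 + Λ * |v|) ^ (-((n : ℝ) - 1) / 2) * |v| ^ (n - 1) /
              (1 + Λ * |ρ - v|) ^ N))
          ≤ ENNReal.ofReal (C * Λ ^ (-((n : ℝ) + 1) / 2) * ρ ^ (((n : ℝ) - 1) / 2))) ∧
      (Λ * ρ ≤ 1 →
        (∫⁻ v : ℝ, ENNReal.ofReal
            ((1 + Λ * |v|) ^ (-((n : ℝ) - 1) / 2) * |v| ^ (n - 1) /
              (1 + Λ * |ρ - v|) ^ N))
          ≤ ENNReal.ofReal (C * Λ ^ (-(n : ℝ)))) := by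
  have hn1 : (1 : ℝ) ≤ (n : ℝ) := by exact_mod_cast hn
  set q : ℝ := ((n : ℝ) - 1) / 2 with hq_def
  have hq : 0 ≤ q := by rw [hq_def]; linarith
  set s : ℝ := (N : ℝ) - q with hs_def
  have hs : 1 < s := by rw [hs_def, hq_def]; linarith
  -- the Japanese bracket integral
  set J : ENNReal := ∫⁻ u : ℝ, ENNReal.ofReal ((1 + |u|) ^ (-s)) with hJ_def
  have hJ : J ≠ ⊤ := by
    rw [hJ_def]
    have h := finite_integral_one_add_norm (E := ℝ) (μ := volume) (r := s)
      (by simp [Module.finrank_self]; linarith)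
    simpa [Real.norm_eq_abs] using h.ne
  set K : ℝ := J.toReal with hK_def
  have hK0 : 0 ≤ K := ENNReal.toReal_nonneg
  have hJK : J = ENNReal.ofReal K := by rw [hK_def, ENNReal.ofReal_toReal hJ]
  refine ⟨K * 2 ^ q, fun Λ ρ hΛ hρ => ?_⟩
  set M : ℝ := (1 + Λ * ρ) ^ q * (Λ⁻¹) ^ (n - 1) with hM_def
  have hM0 : 0 ≤ M := by rw [hM_def]; positivity
  -- pointwise bound
  have hpt : ∀ v : ℝ,
      (1 + Λ * |v|) ^ (-((n : ℝ) - 1) / 2) * |v| ^ (n - 1) / (1 + Λ * |ρ - v|) ^ N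
        ≤ M * (1 + Λ * |ρ - v|) ^ (-s) := by
    intro v
    set a : ℝ := 1 + Λ * |v| with ha_def
    set b : ℝ := 1 + Λ * |ρ - v| with hb_def
    have ha0 : (0 : ℝ) < a := by rw [ha_def]; positivity
    have hb0 : (0 : ℝ) < b := by rw [hb_def]; positivity
    have hv : |v| ≤ Λ⁻¹ * a := by
      rw [le_inv_mul_iff₀ hΛ, ha_def]
      linarith [mul_nonneg hΛ.le (abs_nonneg v)]
    have h1 : a ^ (-((n : ℝ) - 1) / 2) * |v| ^ (n - 1) ≤ (Λ⁻¹) ^ (n - 1) * a ^ q := by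
      calc a ^ (-((n : ℝ) - 1) / 2) * |v| ^ (n - 1)
          ≤ a ^ (-((n : ℝ) - 1) / 2) * (Λ⁻¹ * a) ^ (n - 1) := by
            gcongr
        _ = (Λ⁻¹) ^ (n - 1) * (a ^ (-((n : ℝ) - 1) / 2) * a ^ ((n - 1 : ℕ) : ℝ)) := by
            rw [mul_pow, Real.rpow_natCast]; ring
        _ = (Λ⁻¹) ^ (n - 1) * a ^ q := by
            rw [← Real.rpow_add ha0]
            congr 1
            rw [hq_def, Nat.cast_sub hn]
            push_cast
            ring
    have h2 : a ≤ b * (1 + Λ * ρ) := by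
      have habs : |v| ≤ |ρ - v| + ρ := by
        calc |v| = |ρ - (ρ - v)| := by ring_nf
          _ ≤ |ρ| + |ρ - v| := abs_sub _ _
          _ = |ρ - v| + ρ := by rw [abs_of_pos hρ]; ring
      have h' := mul_le_mul_of_nonneg_left habs hΛ.le
      rw [ha_def, hb_def]
      nlinarith [mul_nonneg (mul_nonneg hΛ.le (abs_nonneg (ρ - v))) (mul_nonneg hΛ.le hρ.le)]
    have h3 : a ^ q ≤ b ^ q * (1 + Λ * ρ) ^ q := by
      rw [← Real.mul_rpow hb0.le (by positivity)]
      exact Real.rpow_le_rpow ha0.le h2 hq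
    have hbq : b ^ q / b ^ N = b ^ (-s) := by
      rw [← Real.rpow_natCast b N, ← Real.rpow_sub hb0]
      congr 1
      rw [hs_def]; ring
    calc a ^ (-((n : ℝ) - 1) / 2) * |v| ^ (n - 1) / b ^ N
        ≤ ((Λ⁻¹) ^ (n - 1) * (b ^ q * (1 + Λ * ρ) ^ q)) / b ^ N := by
          have hnum : a ^ (-((n : ℝ) - 1) / 2) * |v| ^ (n - 1)
              ≤ (Λ⁻¹) ^ (n - 1) * (b ^ q * (1 + Λ * ρ) ^ q) := by
            refine h1.trans ?_
            gcongr
          rw [div_eq_mul_inv, div_eq_mul_inv]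
          exact mul_le_mul_of_nonneg_right hnum (by positivity)
      _ = ((1 + Λ * ρ) ^ q * (Λ⁻¹) ^ (n - 1)) * (b ^ q / b ^ N) := by ring
      _ = M * b ^ (-s) := by rw [hbq, hM_def]
  -- change of variables
  have hGmeas : Measurable fun u : ℝ => ENNReal.ofReal ((1 + |u|) ^ (-s)) := by fun_prop
  have haff : Measurable fun v : ℝ => Λ * ρ + -Λ * v :=
    (measurable_const_mul _).const_add _
  have hmap : Measure.map (fun v : ℝ => Λ * ρ + -Λ * v) volume
      = ENNReal.ofReal Λ⁻¹ • volume := by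
    have hco : (fun v : ℝ => Λ * ρ + -Λ * v)
        = (fun u : ℝ => Λ * ρ + u) ∘ (fun v : ℝ => -Λ * v) := rfl
    rw [hco, ← Measure.map_map (measurable_const_add _) (measurable_const_mul _),
      Real.map_volume_mul_left (neg_ne_zero.mpr hΛ.ne'), Measure.map_smul,
      map_add_left_eq_self]
    congr 1
    rw [abs_inv, abs_neg, abs_of_pos hΛ]
  have hcv : (∫⁻ v : ℝ, ENNReal.ofReal ((1 + Λ * |ρ - v|) ^ (-s)))
      = ENNReal.ofReal Λ⁻¹ * J := by
    have heq : ∀ v : ℝ, 1 + Λ * |ρ - v| = 1 + |Λ * ρ + -Λ * v| := by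
      intro v
      have h' : Λ * ρ + -Λ * v = Λ * (ρ - v) := by ring
      rw [h', abs_mul, abs_of_pos hΛ]
    calc (∫⁻ v : ℝ, ENNReal.ofReal ((1 + Λ * |ρ - v|) ^ (-s)))
        = ∫⁻ v : ℝ, ENNReal.ofReal ((1 + |Λ * ρ + -Λ * v|) ^ (-s)) :=
          lintegral_congr fun v => by rw [heq v]
      _ = ∫⁻ u : ℝ, ENNReal.ofReal ((1 + |u|) ^ (-s))
            ∂(Measure.map (fun v : ℝ => Λ * ρ + -Λ * v) volume) :=
          (lintegral_map hGmeas haff).symm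
      _ = ENNReal.ofReal Λ⁻¹ * J := by rw [hmap, lintegral_smul_measure, hJ_def, smul_eq_mul]
  -- the key estimate
  have key : (∫⁻ v : ℝ, ENNReal.ofReal
      ((1 + Λ * |v|) ^ (-((n : ℝ) - 1) / 2) * |v| ^ (n - 1) / (1 + Λ * |ρ - v|) ^ N))
      ≤ ENNReal.ofReal (K * (1 + Λ * ρ) ^ q * (Λ⁻¹) ^ n) := by
    calc (∫⁻ v : ℝ, ENNReal.ofReal
        ((1 + Λ * |v|) ^ (-((n : ℝ) - 1) / 2) * |v| ^ (n - 1) / (1 + Λ * |ρ - v|) ^ N))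
        ≤ ∫⁻ v : ℝ, ENNReal.ofReal (M * (1 + Λ * |ρ - v|) ^ (-s)) :=
          lintegral_mono fun v => ENNReal.ofReal_le_ofReal (hpt v)
      _ = ENNReal.ofReal M * ∫⁻ v : ℝ, ENNReal.ofReal ((1 + Λ * |ρ - v|) ^ (-s)) := by
          simp_rw [ENNReal.ofReal_mul hM0]
          exact lintegral_const_mul' _ _ ENNReal.ofReal_ne_top
      _ = ENNReal.ofReal M * (ENNReal.ofReal Λ⁻¹ * ENNReal.ofReal K) := by rw [hcv, hJK]
      _ = ENNReal.ofReal (M * (Λ⁻¹ * K)) := by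
          rw [← ENNReal.ofReal_mul (by positivity : (0:ℝ) ≤ Λ⁻¹), ← ENNReal.ofReal_mul hM0]
      _ = ENNReal.ofReal (K * (1 + Λ * ρ) ^ q * (Λ⁻¹) ^ n) := by
          congr 1
          have hnn : n - 1 + 1 = n := Nat.succ_pred_eq_of_pos hn
          have hpow : (Λ⁻¹) ^ (n - 1) * Λ⁻¹ = (Λ⁻¹) ^ n := by
            rw [← pow_succ, hnn]
          rw [hM_def, ← hpow]
          ring
  have e1 : (Λ⁻¹) ^ n = Λ ^ (-(n : ℝ)) := by
    rw [Real.rpow_neg hΛ.le, Real.rpow_natCast, inv_pow]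
  constructor
  · intro hr
    refine key.trans (ENNReal.ofReal_le_ofReal ?_)
    have e2 : Λ ^ (-((n : ℝ) + 1) / 2) = Λ ^ q * Λ ^ (-(n : ℝ)) := by
      rw [← Real.rpow_add hΛ]
      congr 1
      rw [hq_def]; ring
    have e3 : (1 + Λ * ρ) ^ q ≤ 2 ^ q * Λ ^ q * ρ ^ q := by
      calc (1 + Λ * ρ) ^ q ≤ (2 * (Λ * ρ)) ^ q :=
            Real.rpow_le_rpow (by positivity) (by linarith) hq
        _ = 2 ^ q * Λ ^ q * ρ ^ q := by
            rw [Real.mul_rpow (by norm_num) (by positivity),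
              Real.mul_rpow hΛ.le hρ.le]
            ring
    calc K * (1 + Λ * ρ) ^ q * (Λ⁻¹) ^ n
        ≤ K * (2 ^ q * Λ ^ q * ρ ^ q) * (Λ⁻¹) ^ n := by gcongr
      _ = K * 2 ^ q * Λ ^ (-((n : ℝ) + 1) / 2) * ρ ^ q := by rw [e1, e2]; ring
  · intro hr
    refine key.trans (ENNReal.ofReal_le_ofReal ?_)
    have e3 : (1 + Λ * ρ) ^ q ≤ 2 ^ q :=
      Real.rpow_le_rpow (by positivity) (by linarith) hq
    calc K * (1 + Λ * ρ) ^ q * (Λ⁻¹) ^ n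
        ≤ K * 2 ^ q * (Λ⁻¹) ^ n := by gcongr
      _ = K * 2 ^ q * Λ ^ (-(n : ℝ)) := by rw [e1]
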